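/- Define, for a finite outcome set X, a probability vector P on X, a return function G : X → ℝ, and a level β ∈ (0,1): CVaR_β(G; P) = inf over probability vectors Q on X with Q(x) ≤ P(x)/β for all x, of Σ_x Q(x)·G(x). Then: for every M > 0, β ∈ (0,1), q ∈ (0,1), R > 0, and ε > 0, there exist p ∈ (0,1) and R₃, R₄ ∈ ℝ with p·R₃ + (1−p)·R₄ = R − ε, such that the three-outcome distribution assigning probability q to return R, probability (1−q)·p to return R₃, and probability (1−q)·(1−p) to return R₄ satisfies CVaR_β ≤ −M; moreover, the point-mass distribution at return R satisfies CVaR_β = R. (Entropy regularization can degrade risk-averse performance arbitrarily.) -/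

import Mathlib

open Real Finset

/-- Dual representation of CVaR at level `β` for a finite outcome distribution `P`
with return `G`: the infimum of `∑ Q(x) G(x)` over probability vectors `Q` with
`Q(x) ≤ P(x)/β`. -/
noncomputable def cvar {X : Type*} [Fintype X] (β : ℝ) (P G : X → ℝ) : ℝ :=
  sInf { v : ℝ | ∃ Q : X → ℝ, (∀ x, 0 ≤ Q x) ∧ (∑ x, Q x = 1) ∧
    (∀ x, Q x ≤ P x / β) ∧ v = ∑ x, Q x * G x }

lemma cvar_bddBelow {X : Type*} [Fintype X] (β : ℝ) (P G : X → ℝ) :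
    BddBelow { v : ℝ | ∃ Q : X → ℝ, (∀ x, 0 ≤ Q x) ∧ (∑ x, Q x = 1) ∧
      (∀ x, Q x ≤ P x / β) ∧ v = ∑ x, Q x * G x } := by
  refine ⟨-∑ x, |G x|, ?_⟩
  rintro v ⟨Q, hQ0, hQ1, _, rfl⟩
  have hQle1 : ∀ x, Q x ≤ 1 := by
    intro x
    rw [← hQ1]
    exact Finset.single_le_sum (fun y _ => hQ0 y) (Finset.mem_univ x)
  rw [← Finset.sum_neg_distrib]
  apply Finset.sum_le_sum
  intro x _
  have : |Q x * G x| ≤ |G x| := by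
    rw [abs_mul, abs_of_nonneg (hQ0 x)]
    calc Q x * |G x| ≤ 1 * |G x| :=
          mul_le_mul_of_nonneg_right (hQle1 x) (abs_nonneg _)
      _ = |G x| := one_mul _
  linarith [neg_abs_le (Q x * G x)]

/-- **Entropy regularization can degrade risk-averse performance arbitrarily.**
For every `M > 0`, `β, q ∈ (0,1)`, `R > 0` and `ε > 0`, there is a three-outcome
return distribution with mean of the risky branch equal to `R − ε` whose CVaR is
at most `−M`, whereas the point mass at `R` has CVaR equal to `R`. -/
theorem stmt_16 (M β q R ε : ℝ) (hM : 0 < M) (hβ : β ∈ Set.Ioo (0:ℝ) 1)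
    (hq : q ∈ Set.Ioo (0:ℝ) 1) (hR : 0 < R) (hε : 0 < ε) :
    ∃ p ∈ Set.Ioo (0:ℝ) 1, ∃ R₃ R₄ : ℝ,
      p * R₃ + (1 - p) * R₄ = R - ε ∧
      cvar β ![q, (1 - q) * p, (1 - q) * (1 - p)] ![R, R₃, R₄] ≤ -M ∧
      cvar β ![(1:ℝ), 0, 0] ![R, R₃, R₄] = R := by
  obtain ⟨hβ0, hβ1⟩ := hβ
  obtain ⟨hq0, hq1⟩ := hq
  have h1q : (0:ℝ) < 1 - q := by linarith
  set c : ℝ := max 0 ((β - q) / (1 - q)) with hc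
  have hc0 : 0 ≤ c := le_max_left _ _
  have hc1 : c < 1 := by
    apply max_lt one_pos
    rw [div_lt_one h1q]; linarith
  set p : ℝ := (c + 1) / 2 with hp
  have hp0 : 0 < p := by positivity
  have hp1 : p < 1 := by rw [hp]; linarith
  have hcp : c < p := by rw [hp]; linarith
  have hkey : β - q ≤ (1 - q) * p := by
    have h1 : (β - q) / (1 - q) ≤ p := le_of_lt (lt_of_le_of_lt (le_max_right _ _) hcp)
    calc β - q = (β - q) / (1 - q) * (1 - q) := by field_simp
      _ ≤ p * (1 - q) := mul_le_mul_of_nonneg_right h1 (le_of_lt h1q)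
      _ = (1 - q) * p := mul_comm _ _
  set Q1 : ℝ := min 1 ((1 - q) * p / β) with hQ1def
  have hQ1pos : 0 < Q1 := lt_min one_pos (by positivity)
  have hQ1le1 : Q1 ≤ 1 := min_le_left _ _
  set R₃ : ℝ := -((M + R) / Q1) with hR3
  set R₄ : ℝ := (R - ε - p * R₃) / (1 - p) with hR4
  have h1p : (1:ℝ) - p ≠ 0 := by
    intro h; rw [sub_eq_zero] at h; exact absurd h.symm (ne_of_lt hp1)
  refine ⟨p, ⟨hp0, hp1⟩, R₃, R₄, ?_, ?_, ?_⟩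
  · rw [hR4]; field_simp; ring
  · -- cvar of risky distribution ≤ -M
    have hmem : (1 - Q1) * R + Q1 * R₃ ∈
        { v : ℝ | ∃ Q : Fin 3 → ℝ, (∀ x, 0 ≤ Q x) ∧ (∑ x, Q x = 1) ∧
          (∀ x, Q x ≤ ![q, (1 - q) * p, (1 - q) * (1 - p)] x / β) ∧
          v = ∑ x, Q x * ![R, R₃, R₄] x } := by
      refine ⟨![1 - Q1, Q1, 0], ?_, ?_, ?_, ?_⟩
      · intro x; fin_cases x <;> simp <;> linarith
      · simp [Fin.sum_univ_three]
      · intro x; fin_cases x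
        · show 1 - Q1 ≤ q / β
          rcases min_cases 1 ((1 - q) * p / β) with ⟨h, _⟩ | ⟨h, _⟩
          · rw [hQ1def, h]; simp only [sub_self]; positivity
          · rw [hQ1def, h, sub_div' (ne_of_gt hβ0), div_le_div_iff_of_pos_right hβ0]
            linarith
        · show Q1 ≤ (1 - q) * p / β
          exact min_le_right _ _
        · show (0:ℝ) ≤ (1 - q) * (1 - p) / β
          exact div_nonneg (mul_nonneg (by linarith) (by linarith)) (le_of_lt hβ0)
      · simp [Fin.sum_univ_three]
    calc cvar β ![q, (1 - q) * p, (1 - q) * (1 - p)] ![R, R₃, R₄]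
        ≤ (1 - Q1) * R + Q1 * R₃ := csInf_le (cvar_bddBelow β _ _) hmem
      _ ≤ -M := by
          rw [hR3, mul_neg, mul_div_cancel₀ _ (ne_of_gt hQ1pos)]
          nlinarith
  · -- point mass: cvar = R
    have hset : { v : ℝ | ∃ Q : Fin 3 → ℝ, (∀ x, 0 ≤ Q x) ∧ (∑ x, Q x = 1) ∧
        (∀ x, Q x ≤ ![(1:ℝ), 0, 0] x / β) ∧ v = ∑ x, Q x * ![R, R₃, R₄] x } = {R} := by
      ext v
      simp only [Set.mem_setOf_eq, Set.mem_singleton_iff]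
      constructor
      · rintro ⟨Q, hQ0, hQs, hQb, rfl⟩
        have h1 : Q 1 = 0 := by
          have := hQb 1; simp at this
          exact le_antisymm this (hQ0 1)
        have h2 : Q 2 = 0 := by
          have := hQb 2; simp at this
          exact le_antisymm this (hQ0 2)
        have h0 : Q 0 = 1 := by
          rw [Fin.sum_univ_three, h1, h2] at hQs; linarith
        simp [Fin.sum_univ_three, h0, h1, h2]
      · rintro rfl
        refine ⟨![1, 0, 0], ?_, ?_, ?_, ?_⟩
        · intro x; fin_cases x <;> simp
        · simp [Fin.sum_univ_three]
        · intro x; fin_cases x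
          · show (1:ℝ) ≤ 1 / β
            rw [le_div_iff₀ hβ0]; linarith
          · show (0:ℝ) ≤ 0 / β
            simp
          · show (0:ℝ) ≤ 0 / β
            simp
        · simp [Fin.sum_univ_three]
    rw [cvar, hset, csInf_singleton]
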